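/- Let R ⊆ S be integral domains, 𝔫 ∈ Max S with R_{𝔫∩R} = S_𝔫, and let 𝔭 be a prime of R contained in 𝔪 = 𝔫 ∩ R, with chain 𝔭₀ ⊊ ⋯ ⊊ 𝔭_d = 𝔭 of primes of R. Then setting 𝔮ᵢ = 𝔭ᵢS_𝔫 ∩ S, the 𝔮ᵢ form a strictly increasing chain of prime ideals of S with 𝔮ᵢ ∩ R = 𝔭ᵢ for all i. -/

import Mathlib

/-- The localization of a ring `T` at an ideal `M`, realized as a subset of `K` via
`f : T →+* K`. -/
def locSet {T K : Type*} [CommRing T] [CommRing K] (f : T →+* K) (M : Ideal T) : Set K :=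
  {x | ∃ a b : T, b ∉ M ∧ x * f b = f a}

/-- Let `R ⊆ S` be integral domains, `𝔫 ∈ Max S` with `R_{𝔫 ∩ R} = S_𝔫`, and let
`𝔭₀ ⊊ ⋯ ⊊ 𝔭_d` be a chain of primes of `R` with `𝔭_d ⊆ 𝔪 = 𝔫 ∩ R`.  Setting
`𝔮ᵢ = 𝔭ᵢS_𝔫 ∩ S`, the `𝔮ᵢ` form a strictly increasing chain of primes of `S` with
`𝔮ᵢ ∩ R = 𝔭ᵢ` for all `i`. -/
theorem stmt_15 {S : Type*} [CommRing S] [IsDomain S] (R : Subring S)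
    (n : Ideal S) [hnp : n.IsPrime] (hn : n.IsMaximal)
    (hloc : locSet ((algebraMap S (FractionRing S)).comp R.subtype) (n.comap R.subtype)
      = locSet (algebraMap S (FractionRing S)) n)
    (d : ℕ) (p : Fin (d + 1) → Ideal R)
    (hchain : StrictMono p) (hprime : ∀ i, (p i).IsPrime)
    (htop : p (Fin.last d) ≤ n.comap R.subtype)
    (q : Fin (d + 1) → Ideal S)
    (hq : q = fun i => Ideal.comap (algebraMap S (Localization.AtPrime n))
      (Ideal.map ((algebraMap S (Localization.AtPrime n)).comp R.subtype) (p i))) :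
    StrictMono q ∧ (∀ i, (q i).IsPrime) ∧ ∀ i, (q i).comap R.subtype = p i := by
  subst hq
  set K := FractionRing S
  set L := Localization.AtPrime n with hL
  set m := n.comap R.subtype with hm
  set f : ↥R →+* L := (algebraMap S L).comp R.subtype with hf
  set gL : S →+* L := algebraMap S L with hgL
  set gK : S →+* K := algebraMap S K with hgK
  have hnz : (n.primeCompl : Set S) ≤ (nonZeroDivisors S : Set S) := fun x hx =>
    mem_nonZeroDivisors_of_ne_zero (fun h => hx (h ▸ n.zero_mem))
  have hgLinj : Function.Injective gL := IsLocalization.injective L hnz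
  have hgKinj : Function.Injective gK := IsFractionRing.injective S K
  letI : Algebra ↥R L := f.toAlgebra
  have halg : algebraMap ↥R L = f := rfl
  haveI hIL : IsLocalization m.primeCompl L := by
    constructor
    constructor
    · rintro ⟨b, hb⟩
      exact IsLocalization.map_units L (⟨(b : S), hb⟩ : n.primeCompl)
    · intro z
      obtain ⟨⟨s, t⟩, hst⟩ := IsLocalization.surj n.primeCompl z
      have ht : (t : S) ∉ n := t.2
      have htK : gK t ≠ 0 := fun h => ht (by
        have : (t : S) = 0 := hgKinj (h.trans (map_zero gK).symm)
        rw [this]; exact n.zero_mem)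
      have hx : (gK s / gK t) ∈ locSet gK n := ⟨s, t, ht, div_mul_cancel₀ _ htK⟩
      rw [← hloc] at hx
      obtain ⟨a, b, hb, hab⟩ := hx
      have hSK : gK (s * (b : S)) = gK ((a : S) * (t : S)) := by
        rw [map_mul, map_mul]
        have hab' : gK s / gK t * gK (b : S) = gK (a : S) := hab
        rw [div_mul_eq_mul_div, div_eq_iff htK] at hab'
        linear_combination hab'
      have hSS : s * (b : S) = (a : S) * (t : S) := hgKinj hSK
      have hcancel : (z * gL (b : S)) * gL (t : S) = gL (a : S) * gL (t : S) := by
        rw [mul_right_comm, hst, ← map_mul, ← map_mul, hSS]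
      have hu : IsUnit (gL (t : S)) := IsLocalization.map_units L t
      refine ⟨⟨a, ⟨b, hb⟩⟩, ?_⟩
      exact hu.mul_right_cancel hcancel
    · intro a b h
      refine ⟨1, ?_⟩
      have : (a : S) = (b : S) := hgLinj h
      simp [Subtype.ext this]
  have hdisj : ∀ i, Disjoint (m.primeCompl : Set ↥R) ((p i : Ideal ↥R) : Set ↥R) := by
    intro i
    rw [Set.disjoint_left]
    intro x hx hxp
    exact hx (htop (hchain.monotone (Fin.le_last i) hxp))
  have hQprime : ∀ i, (Ideal.map f (p i)).IsPrime := fun i =>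
    halg ▸ IsLocalization.isPrime_of_isPrime_disjoint m.primeCompl L (p i) (hprime i) (hdisj i)
  have hQcomap : ∀ i, (Ideal.map f (p i)).comap f = p i := fun i =>
    halg ▸ IsLocalization.comap_map_of_isPrime_disjoint m.primeCompl L (I := p i) (hprime i) (hdisj i)
  have hcomp : ∀ i, ((Ideal.map f (p i)).comap gL).comap R.subtype = p i := by
    intro i
    rw [Ideal.comap_comap, ← hf, hQcomap]
  refine ⟨?_, ?_, ?_⟩
  · intro i j hij
    refine lt_of_le_of_ne (Ideal.comap_mono (Ideal.map_mono (hchain hij).le)) ?_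
    intro heq
    exact (hchain hij).ne (by rw [← hcomp i, ← hcomp j]; exact congrArg _ heq)
  · intro i
    haveI := hQprime i
    exact Ideal.IsPrime.comap gL
  · exact hcomp
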